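/- For k ≥ 2, the equivalence relation F₀(k) on Cantor space is generically ergodic: every F₀(k)-invariant subset of 2^ℕ with the Baire property is meager or comeager. Here c F₀(k) d iff there exists n such that for all m ≥ n, Σ_{i<m} c(i) ≡ Σ_{i<m} d(i) (mod k). -/

import Mathlib

open Finset in
/-- The index-`k` subrelation `F₀(k)` of `E₀`: eventual agreement of partial
sums modulo `k`. -/
def F0 (k : ℕ) (c d : ℕ → Bool) : Prop :=
  ∃ n : ℕ, ∀ m ≥ n,
    (∑ i ∈ range m, (c i).toNat) % k = (∑ i ∈ range m, (d i).toNat) % k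

open Finset Filter Topology Set

namespace F0Aux

/-- Basic cylinder: agree with `s` on the first `n` coordinates. -/
def Cyl (s : ℕ → Bool) (n : ℕ) : Set (ℕ → Bool) := {c | ∀ i < n, c i = s i}

lemma self_mem_cyl (s : ℕ → Bool) (n : ℕ) : s ∈ Cyl s n := fun _ _ => rfl

lemma isOpen_cyl (s : ℕ → Bool) (n : ℕ) : IsOpen (Cyl s n) := by
  have : Cyl s n = ⋂ i : Fin n, (fun c : ℕ → Bool => c i) ⁻¹' {s i} := by
    ext c
    simp only [Cyl, Set.mem_setOf_eq, Set.mem_iInter, Set.mem_preimage, Set.mem_singleton_iff]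
    exact ⟨fun h i => h i i.2, fun h i hi => h ⟨i, hi⟩⟩
  rw [this]
  exact isOpen_iInter_of_finite fun i =>
    (isOpen_discrete _).preimage (continuous_apply (i : ℕ))

/-- Every point of an open set is contained in a cylinder inside it. -/
lemma exists_cyl_subset {U : Set (ℕ → Bool)} (hU : IsOpen U) {x : ℕ → Bool} (hx : x ∈ U) :
    ∃ n, Cyl x n ⊆ U := by
  rcases isOpen_pi_iff.mp hU x hx with ⟨I, u, hIu, hsub⟩
  refine ⟨I.sup id + 1, fun c hc => hsub ?_⟩
  intro i hi
  have : c i = x i := hc i (Nat.lt_succ_of_le (Finset.le_sup (f := id) hi))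
  rw [this]
  exact (hIu i hi).2

/-- The prefix-xor involution. -/
def swapMap (u : ℕ → Bool) (N : ℕ) : (ℕ → Bool) ≃ₜ (ℕ → Bool) where
  toFun c := fun i => if i < N then xor (c i) (u i) else c i
  invFun c := fun i => if i < N then xor (c i) (u i) else c i
  left_inv c := by
    funext i; by_cases h : i < N <;>
      simp [h, Bool.xor_assoc]
  right_inv c := by
    funext i; by_cases h : i < N <;>
      simp [h, Bool.xor_assoc]
  continuous_toFun := by
    refine continuous_pi fun i => ?_
    have : (fun c : ℕ → Bool => if i < N then xor (c i) (u i) else c i)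
        = (fun b : Bool => if i < N then xor b (u i) else b) ∘ (fun c => c i) := rfl
    rw [this]
    exact continuous_of_discreteTopology.comp (continuous_apply i)
  continuous_invFun := by
    refine continuous_pi fun i => ?_
    have : (fun c : ℕ → Bool => if i < N then xor (c i) (u i) else c i)
        = (fun b : Bool => if i < N then xor b (u i) else b) ∘ (fun c => c i) := rfl
    rw [this]
    exact continuous_of_discreteTopology.comp (continuous_apply i)

lemma sum_split (f : ℕ → ℕ) {N m : ℕ} (h : N ≤ m) :
    ∑ i ∈ range m, f i = (∑ i ∈ range N, f i) + ∑ i ∈ Finset.Ico N m, f i := by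
  rw [range_eq_Ico, range_eq_Ico]
  exact (Finset.sum_Ico_consecutive f (Nat.zero_le N) h).symm

/-- Meagerness of `Cyl s N \ B` transfers to `Cyl t N \ B` when the prefixes
have the same sum mod `k`. -/
lemma transfer (k : ℕ) (B : Set (ℕ → Bool))
    (hBinv : ∀ c d, F0 k c d → (c ∈ B ↔ d ∈ B)) (s t : ℕ → Bool) (N : ℕ)
    (hsum : (∑ i ∈ range N, (s i).toNat) % k = (∑ i ∈ range N, (t i).toNat) % k)
    (hm : IsMeagre (Cyl s N \ B)) : IsMeagre (Cyl t N \ B) := by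
  set g := swapMap (fun i => xor (s i) (t i)) N with hg
  have hgc : ∀ c ∈ Cyl t N, ∀ i < N, g c i = s i := by
    intro c hc i hi
    have := hc i hi
    simp only [hg, swapMap, Homeomorph.homeomorph_mk_coe, Equiv.coe_fn_mk, if_pos hi, this]
    cases s i <;> cases t i <;> rfl
  have hge : ∀ (c : ℕ → Bool), ∀ i, ¬ i < N → g c i = c i := by
    intro c i hi
    simp [hg, swapMap, if_neg hi]
  have key : Cyl t N \ B ⊆ g ⁻¹' (Cyl s N \ B) := by
    intro c hc
    have hcyl : g c ∈ Cyl s N := fun i hi => hgc c hc.1 i hi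
    have hF : F0 k c (g c) := by
      refine ⟨N, fun m hm' => ?_⟩
      rw [sum_split _ hm', sum_split (fun i => ((g c) i).toNat) hm']
      have h1 : ∑ i ∈ range N, (c i).toNat = ∑ i ∈ range N, (t i).toNat :=
        Finset.sum_congr rfl fun i hi => by rw [hc.1 i (Finset.mem_range.mp hi)]
      have h2 : ∑ i ∈ range N, ((g c) i).toNat = ∑ i ∈ range N, (s i).toNat :=
        Finset.sum_congr rfl fun i hi => by rw [hgc c hc.1 i (Finset.mem_range.mp hi)]
      have h3 : ∑ i ∈ Finset.Ico N m, ((g c) i).toNat = ∑ i ∈ Finset.Ico N m, (c i).toNat :=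
        Finset.sum_congr rfl fun i hi => by
          rw [hge c i (by have := (Finset.mem_Ico.mp hi).1; omega)]
      rw [h1, h2, h3]
      exact Nat.ModEq.add_right _ hsum.symm
    refine ⟨hcyl, fun hgB => hc.2 ((hBinv c (g c) hF).mpr hgB)⟩
  exact (hm.preimage_of_isOpenMap g.continuous g.isOpenMap).mono key

/-- The padded extension of a prefix. -/
def ext (s : ℕ → Bool) (n a : ℕ) : ℕ → Bool :=
  fun i => if i < n then s i else if i < n + a then true else false

lemma ext_sum (s : ℕ → Bool) (n a N : ℕ) (h : n + a ≤ N) :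
    ∑ i ∈ range N, (ext s n a i).toNat = (∑ i ∈ range n, (s i).toNat) + a := by
  rw [sum_split _ h, sum_split (fun i => (ext s n a i).toNat) (Nat.le_add_right n a)]
  have h1 : ∑ i ∈ range n, (ext s n a i).toNat = ∑ i ∈ range n, (s i).toNat :=
    Finset.sum_congr rfl fun i hi => by
      simp [ext, if_pos (Finset.mem_range.mp hi)]
  have h2 : ∑ i ∈ Finset.Ico n (n + a), (ext s n a i).toNat = a := by
    have : ∀ i ∈ Finset.Ico n (n + a), (ext s n a i).toNat = 1 := by
      intro i hi
      rcases Finset.mem_Ico.mp hi with ⟨hi1, hi2⟩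
      simp [ext, if_neg (by omega : ¬ i < n), if_pos hi2]
    rw [Finset.sum_congr rfl this, Finset.sum_const, Nat.card_Ico, smul_eq_mul]
    omega
  have h3 : ∑ i ∈ Finset.Ico (n + a) N, (ext s n a i).toNat = 0 := by
    refine Finset.sum_eq_zero fun i hi => ?_
    rcases Finset.mem_Ico.mp hi with ⟨hi1, hi2⟩
    simp [ext, if_neg (by omega : ¬ i < n), if_neg (by omega : ¬ i < n + a)]
  rw [h1, h2, h3]
  omega

lemma cyl_ext_subset (s : ℕ → Bool) (n a N : ℕ) (h : n ≤ N) :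
    Cyl (ext s n a) N ⊆ Cyl s n := by
  intro c hc i hi
  rw [hc i (lt_of_lt_of_le hi h)]
  simp [ext, if_pos hi]

/-- A nonmeager Baire-measurable set is comeager in some cylinder. -/
lemma exists_cyl_comeager {B : Set (ℕ → Bool)} (hBbp : BaireMeasurableSet B)
    (hB : ¬ IsMeagre B) : ∃ s n, IsMeagre (Cyl s n \ B) := by
  rcases hBbp.residualEq_isOpen with ⟨U, hUo, hBU⟩
  have hdiff : IsMeagre (U \ B) := by
    rw [IsMeagre]
    refine Filter.mem_of_superset hBU fun x hx => ?_
    simp only [Set.mem_compl_iff, Set.mem_diff, not_and, not_not]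
    intro hxU
    exact (show (x ∈ B) = (x ∈ U) from hx) ▸ hxU
  have hdiff2 : IsMeagre (B \ U) := by
    rw [IsMeagre]
    refine Filter.mem_of_superset hBU fun x hx => ?_
    simp only [Set.mem_compl_iff, Set.mem_diff, not_and, not_not]
    intro hxB
    exact (show (x ∈ B) = (x ∈ U) from hx) ▸ hxB
  have hUne : U.Nonempty := by
    by_contra hne
    rw [Set.not_nonempty_iff_eq_empty] at hne
    apply hB
    have : B = B \ U := by rw [hne]; simp
    rw [this]; exact hdiff2
  rcases hUne with ⟨x, hx⟩
  rcases exists_cyl_subset hUo hx with ⟨n, hsub⟩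
  exact ⟨x, n, hdiff.mono (t := Cyl x n \ B) fun c (hc : c ∈ Cyl x n \ B) => (⟨hsub hc.1, hc.2⟩ : c ∈ U \ B)⟩

lemma cyl_not_meagre (s : ℕ → Bool) (n : ℕ) : ¬ IsMeagre (Cyl s n) := by
  intro h
  have hd : Dense (Cyl s n)ᶜ := dense_of_mem_residual h
  rcases hd.inter_open_nonempty _ (isOpen_cyl s n) ⟨s, self_mem_cyl s n⟩ with ⟨x, hx1, hx2⟩
  exact hx2 hx1

end F0Aux

open F0Aux in
/-- `F₀(k)` is generically ergodic. -/
theorem f0_generically_ergodic (k : ℕ) (hk : 2 ≤ k)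
    (B : Set (ℕ → Bool)) (hBinv : ∀ c d, F0 k c d → (c ∈ B ↔ d ∈ B))
    (hBbp : BaireMeasurableSet B) :
    IsMeagre B ∨ IsMeagre Bᶜ := by
  by_contra h
  push_neg at h
  obtain ⟨hB, hBc⟩ := h
  obtain ⟨s, n1, hs⟩ := exists_cyl_comeager hBbp hB
  obtain ⟨t, n2, ht⟩ := exists_cyl_comeager hBbp.compl hBc
  set σs := ∑ i ∈ range n1, (s i).toNat with hσs
  set σt := ∑ i ∈ range n2, (t i).toNat with hσt
  set a := k - σs % k with ha
  set b := k - σt % k with hb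
  set N := max n1 n2 + k with hN
  have hk0 : 0 < k := by omega
  have hsmod : σs % k < k := Nat.mod_lt _ hk0
  have htmod : σt % k < k := Nat.mod_lt _ hk0
  have haN : n1 + a ≤ N := by simp only [hN, ha]; omega
  have hbN : n2 + b ≤ N := by simp only [hN, hb]; omega
  set s' := ext s n1 a with hs'
  set t' := ext t n2 b with ht'
  have hsum1 : ∑ i ∈ range N, (s' i).toNat = σs + a := ext_sum s n1 a N haN
  have hsum2 : ∑ i ∈ range N, (t' i).toNat = σt + b := ext_sum t n2 b N hbN
  have hmod1 : (σs + a) % k = 0 := by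
    have hd := Nat.div_add_mod σs k
    have : σs + a = k * (σs / k + 1) := by
      rw [Nat.mul_add, Nat.mul_one]; simp only [ha]; omega
    rw [this]; exact Nat.mul_mod_right _ _
  have hmod2 : (σt + b) % k = 0 := by
    have hd := Nat.div_add_mod σt k
    have : σt + b = k * (σt / k + 1) := by
      rw [Nat.mul_add, Nat.mul_one]; simp only [hb]; omega
    rw [this]; exact Nat.mul_mod_right _ _
  have hsum : (∑ i ∈ range N, (s' i).toNat) % k = (∑ i ∈ range N, (t' i).toNat) % k := by
    rw [hsum1, hsum2, hmod1, hmod2]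
  -- comeagerness restricts to subcylinders
  have hs'm : IsMeagre (Cyl s' N \ B) :=
    hs.mono (t := Cyl s' N \ B) fun c (hc : c ∈ Cyl s' N \ B) =>
      (⟨cyl_ext_subset s n1 a N (by omega) hc.1, hc.2⟩ : c ∈ Cyl s n1 \ B)
  have ht'm : IsMeagre (Cyl t' N \ Bᶜ) :=
    ht.mono (t := Cyl t' N \ Bᶜ) fun c (hc : c ∈ Cyl t' N \ Bᶜ) =>
      (⟨cyl_ext_subset t n2 b N (by omega) hc.1, hc.2⟩ : c ∈ Cyl t n2 \ Bᶜ)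
  -- transfer
  have htB : IsMeagre (Cyl t' N \ B) := transfer k B hBinv s' t' N hsum hs'm
  -- contradiction
  apply cyl_not_meagre t' N
  have hcover : Cyl t' N ⊆ (Cyl t' N \ B) ∪ (Cyl t' N \ Bᶜ) := by
    intro c hc
    by_cases hcB : c ∈ B
    · exact Or.inr ⟨hc, fun h => h hcB⟩
    · exact Or.inl ⟨hc, hcB⟩
  have hunion : IsMeagre ((Cyl t' N \ B) ∪ (Cyl t' N \ Bᶜ)) := by
    rw [IsMeagre, Set.compl_union]
    exact Filter.inter_mem htB ht'm
  exact hunion.mono hcover
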